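/- Let p be a prime, n > 1 a natural number, and let v = v_p(n) be the p-adic valuation of n. For every natural number k > v, the map x ↦ x^n is a bijection from {x ∈ ℤ_p : ‖x − 1‖ ≤ p^{−k}} onto {x ∈ ℤ_p : ‖x − 1‖ ≤ p^{−(k+v)}} (i.e. it maps 1 + p^k ℤ_p bijectively onto 1 + p^{k+v} ℤ_p). -/

import Mathlib

open PadicInt Polynomial Finset

lemma norm_natCast_padic (p : ℕ) [Fact p.Prime] (n : ℕ) (hn : n ≠ 0) :
    ‖(n : ℤ_[p])‖ = (p : ℝ) ^ (-(padicValNat p n : ℤ)) := by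
  have : ((n : ℤ_[p]) : ℚ_[p]) = ((n : ℚ) : ℚ_[p]) := by push_cast; ring
  rw [← padic_norm_e_of_padicInt, this, Padic.eq_padicNorm,
    padicNorm.eq_zpow_of_nonzero (by exact_mod_cast hn), padicValRat.of_nat]
  push_cast
  ring_nf

lemma norm_sum_le_padic (p : ℕ) [Fact p.Prime] (m : ℕ) (f : ℕ → ℤ_[p]) (C : ℝ)
    (hC : 0 ≤ C) (h : ∀ i < m, ‖f i‖ ≤ C) : ‖∑ i ∈ range m, f i‖ ≤ C := by
  induction m with
  | zero => simpa using hC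
  | succ m ih =>
    rw [Finset.sum_range_succ]
    refine le_trans (PadicInt.nonarchimedean _ _) (max_le ?_ ?_)
    · exact ih fun i hi => h i (hi.trans (Nat.lt_succ_self m))
    · exact h m (Nat.lt_succ_self m)

lemma norm_pow_sub_one_le (p : ℕ) [Fact p.Prime] (a : ℤ_[p]) (i : ℕ) :
    ‖a ^ i - 1‖ ≤ ‖a - 1‖ := by
  have h := geom_sum_mul a i
  calc ‖a ^ i - 1‖ = ‖(∑ j ∈ range i, a ^ j) * (a - 1)‖ := by rw [h]
    _ = ‖∑ j ∈ range i, a ^ j‖ * ‖a - 1‖ := norm_mul _ _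
    _ ≤ 1 * ‖a - 1‖ :=
        mul_le_mul_of_nonneg_right (PadicInt.norm_le_one _) (norm_nonneg _)
    _ = ‖a - 1‖ := one_mul _

lemma key_norm (p : ℕ) [Fact p.Prime] (n : ℕ) (hn : 0 < n) (a b : ℤ_[p])
    (ha : ‖a - 1‖ < ‖(n : ℤ_[p])‖) (hb : ‖b - 1‖ < ‖(n : ℤ_[p])‖) :
    ‖a ^ n - b ^ n‖ = ‖(n : ℤ_[p])‖ * ‖a - b‖ := by
  set S : ℤ_[p] := ∑ i ∈ range n, a ^ i * b ^ (n - 1 - i) with hS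
  have hgeo : S * (a - b) = a ^ n - b ^ n := geom_sum₂_mul a b n
  have hterm : ∀ i < n, ‖a ^ i * b ^ (n - 1 - i) - 1‖ ≤ max ‖a - 1‖ ‖b - 1‖ := by
    intro i _
    have h1 : a ^ i * b ^ (n - 1 - i) - 1
        = a ^ i * (b ^ (n - 1 - i) - 1) + (a ^ i - 1) := by ring
    rw [h1]
    refine le_trans (PadicInt.nonarchimedean _ _) (max_le ?_ ?_)
    · refine le_trans ?_ (le_max_right _ _)
      calc ‖a ^ i * (b ^ (n - 1 - i) - 1)‖ = ‖a ^ i‖ * ‖b ^ (n - 1 - i) - 1‖ :=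
            norm_mul _ _
        _ ≤ 1 * ‖b ^ (n - 1 - i) - 1‖ :=
            mul_le_mul_of_nonneg_right (PadicInt.norm_le_one _) (norm_nonneg _)
        _ = ‖b ^ (n - 1 - i) - 1‖ := one_mul _
        _ ≤ ‖b - 1‖ := norm_pow_sub_one_le p b _
    · exact le_trans (norm_pow_sub_one_le p a i) (le_max_left _ _)
  have hSn : ‖S - n‖ < ‖(n : ℤ_[p])‖ := by
    have h2 : S - (n : ℤ_[p]) = ∑ i ∈ range n, (a ^ i * b ^ (n - 1 - i) - 1) := by
      rw [Finset.sum_sub_distrib]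
      simp [hS]
    rw [h2]
    exact lt_of_le_of_lt
      (norm_sum_le_padic p n _ _ (le_max_of_le_left (norm_nonneg _)) hterm)
      (max_lt ha hb)
  have hSnorm : ‖S‖ = ‖(n : ℤ_[p])‖ := by
    have : S = (n : ℤ_[p]) + (S - n) := by ring
    rw [this, PadicInt.norm_add_eq_max_of_ne (ne_of_gt hSn), max_eq_left hSn.le]
  calc ‖a ^ n - b ^ n‖ = ‖S * (a - b)‖ := by rw [hgeo]
    _ = ‖S‖ * ‖a - b‖ := norm_mul _ _
    _ = ‖(n : ℤ_[p])‖ * ‖a - b‖ := by rw [hSnorm]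

theorem pow_n_bijOn_ball (p : ℕ) [Fact p.Prime] (n : ℕ) (hn : 1 < n)
    (k : ℕ) (hk : padicValNat p n < k) :
    Set.BijOn (fun x : ℤ_[p] => x ^ n)
      {x : ℤ_[p] | ‖x - 1‖ ≤ (p : ℝ) ^ (-(k : ℤ))}
      {x : ℤ_[p] | ‖x - 1‖ ≤ (p : ℝ) ^ (-(k + padicValNat p n : ℤ))} := by
  have hp1 : (1 : ℝ) < (p : ℝ) := by exact_mod_cast (Fact.out : p.Prime).one_lt
  set v := padicValNat p n with hvdef
  have hn0 : n ≠ 0 := by omega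
  have hv : ‖(n : ℤ_[p])‖ = (p : ℝ) ^ (-(v : ℤ)) := norm_natCast_padic p n hn0
  have hkv : (p : ℝ) ^ (-(k : ℤ)) < (p : ℝ) ^ (-(v : ℤ)) := by
    apply zpow_lt_zpow_right₀ hp1; omega
  have hball : ∀ x : ℤ_[p], ‖x - 1‖ ≤ (p : ℝ) ^ (-(k : ℤ)) → ‖x - 1‖ < ‖(n : ℤ_[p])‖ :=
    fun x hx => hv ▸ lt_of_le_of_lt hx hkv
  have h1 : ‖(1 : ℤ_[p]) - 1‖ < ‖(n : ℤ_[p])‖ := by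
    rw [sub_self, norm_zero, hv]; positivity
  have hmul : (p : ℝ) ^ (-(v : ℤ)) * (p : ℝ) ^ (-(k : ℤ)) = (p : ℝ) ^ (-(k + v : ℤ)) := by
    rw [← zpow_add₀ (by positivity : (p:ℝ) ≠ 0)]; ring_nf
  refine ⟨?_, ?_, ?_⟩
  · -- MapsTo
    intro x hx
    have := key_norm p n (by omega) x 1 (hball x hx) h1
    simp only [Set.mem_setOf_eq, one_pow] at *
    rw [this, hv]
    calc (p : ℝ) ^ (-(v : ℤ)) * ‖x - 1‖ ≤ (p : ℝ) ^ (-(v : ℤ)) * (p : ℝ) ^ (-(k : ℤ)) := by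
          apply mul_le_mul_of_nonneg_left hx; positivity
      _ = (p : ℝ) ^ (-(k + v : ℤ)) := hmul
  · -- InjOn
    intro x hx y hy hxy
    simp only [Set.mem_setOf_eq] at hx hy
    have := key_norm p n (by omega) x y (hball x hx) (hball y hy)
    simp only at hxy
    rw [hxy, sub_self, norm_zero] at this
    have hnn : ‖(n : ℤ_[p])‖ ≠ 0 := by rw [hv]; positivity
    have : ‖x - y‖ = 0 := by
      rcases mul_eq_zero.mp this.symm with h | h
      · exact absurd h hnn
      · exact h
    exact sub_eq_zero.mp (norm_eq_zero.mp this)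
  · -- SurjOn
    intro y hy
    simp only [Set.mem_setOf_eq] at hy
    set F : Polynomial ℤ_[p] := Polynomial.X ^ n - Polynomial.C y with hF
    have hF1 : F.eval 1 = 1 - y := by simp [hF]
    have hF'1 : F.derivative.eval 1 = (n : ℤ_[p]) := by
      simp [hF, Polynomial.derivative_X_pow]
    have hhyp : ‖F.eval 1‖ < ‖F.derivative.eval 1‖ ^ 2 := by
      rw [hF1, hF'1, norm_sub_rev, hv, ← zpow_natCast ((p:ℝ) ^ (-(v:ℤ))), ← zpow_mul]
      refine lt_of_le_of_lt hy (zpow_lt_zpow_right₀ hp1 ?_)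
      push_cast; omega
    obtain ⟨z, hz0, hz1, -, -⟩ := hensels_lemma hhyp
    have hzn : z ^ n = y := by
      have := hz0
      simp [hF] at this
      exact sub_eq_zero.mp this
    rw [Polynomial.coe_aeval_eq_eval, hF'1] at hz1
    have hknorm := key_norm p n (by omega) z 1 hz1 h1
    simp only [one_pow, hzn] at hknorm
    have hzball : ‖z - 1‖ ≤ (p : ℝ) ^ (-(k : ℤ)) := by
      have hpos : (0:ℝ) < (p : ℝ) ^ (-(v : ℤ)) := by positivity
      rw [hknorm, hv, ← hmul] at hy
      exact le_of_mul_le_mul_left hy hpos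
    exact ⟨z, hzball, hzn⟩
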